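/- For all real numbers α, β with α ≠ 0, the Lorentzian Lie algebra (𝔤₁, g, J) is not a first kind algebraic Wanas soliton associated to the canonical connection ∇⁰; that is, there exist no real number c and no derivation D : 𝔤₁ → 𝔤₁ such that Wan⁰ = c·Id + D. -/

import Mathlib

noncomputable section

/-- The underlying vector space `ℝ³`. -/
abbrev V : Type := Fin 3 → ℝ

/-- The basis vector `e₁`. -/
def e1 : V := ![1, 0, 0]

/-- The basis vector `e₂`. -/
def e2 : V := ![0, 1, 0]

/-- The basis vector `e₃`. -/
def e3 : V := ![0, 0, 1]

/-- The Lorentzian metric `g` with `g(e₁,e₁) = g(e₂,e₂) = 1`, `g(e₃,e₃) = -1`. -/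
def g (x y : V) : ℝ := x 0 * y 0 + x 1 * y 1 - x 2 * y 2

/-- The Lie bracket. -/
def br (α β : ℝ) (x y : V) : V :=
  (x 0 * y 1 - x 1 * y 0) • (α • e1 - β • e3) + (x 0 * y 2 - x 2 * y 0) • (-(α • e1) - β • e2) +
    (x 1 * y 2 - x 2 * y 1) • (β • e1 + α • e2 + α • e3)

/-- The canonical connection `∇⁰`. -/
def nab (α β : ℝ) (x y : V) : V :=
  (x 0 * y 0) • (-(α • e2)) + (x 0 * y 1) • (α • e1) + (x 2 * y 0) • ((β / 2) • e2) +
    (x 2 * y 1) • (-((β / 2) • e1))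

/-- The torsion `T⁰(X,Y) = ∇⁰_X Y - ∇⁰_Y X - [X,Y]`. -/
def T (α β : ℝ) (x y : V) : V := nab α β x y - nab α β y x - br α β x y

/-- The tensor `A⁰(X,Y)Z = T⁰(T⁰(X,Y),Z)`. -/
def A (α β : ℝ) (x y z : V) : V := T α β (T α β x y) z

/-- The curvature `R⁰(X,Y)Z = ∇⁰_X ∇⁰_Y Z - ∇⁰_Y ∇⁰_X Z - ∇⁰_{[X,Y]} Z`. -/
def Rc (α β : ℝ) (x y z : V) : V :=
  nab α β x (nab α β y z) - nab α β y (nab α β x z) - nab α β (br α β x y) z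

/-- The Wanas tensor `W⁰(X,Y)Z = R⁰(X,Y)Z - A⁰(X,Y)Z`. -/
def W (α β : ℝ) (x y z : V) : V := Rc α β x y z - A α β x y z

/-- `w⁰(X,Y) = -g(W⁰(X,e₁)Y,e₁) - g(W⁰(X,e₂)Y,e₂) + g(W⁰(X,e₃)Y,e₃)`. -/
def w (α β : ℝ) (x y : V) : ℝ :=
  -g (W α β x e1 y) e1 - g (W α β x e2 y) e2 + g (W α β x e3 y) e3

/-- `w̃⁰(X,Y) = (w⁰(X,Y) + w⁰(Y,X))/2`. -/
def wt (α β : ℝ) (x y : V) : ℝ := (w α β x y + w α β y x) / 2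

/-- `D` is a derivation of the Lie algebra. -/
def IsDeriv (α β : ℝ) (D : V →ₗ[ℝ] V) : Prop :=
  ∀ x y, D (br α β x y) = br α β (D x) y + br α β x (D y)

set_option maxHeartbeats 1000000 in
theorem g1_not_first_kind_algebraic_Wanas_soliton (α β : ℝ) (hα : α ≠ 0)
    (Wan : V →ₗ[ℝ] V) (hWan : ∀ x y, w α β x y = g (Wan x) y) :
    ¬ ∃ (c : ℝ) (D : V →ₗ[ℝ] V), IsDeriv α β D ∧ ∀ x, Wan x = c • x + D x := by
  rintro ⟨c, D, hD, h⟩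
  have ec : (e1 0 : ℝ) = 1 ∧ (e1 1 : ℝ) = 0 ∧ (e1 2 : ℝ) = 0 ∧ (e2 0 : ℝ) = 0 ∧
      (e2 1 : ℝ) = 1 ∧ (e2 2 : ℝ) = 0 ∧ (e3 0 : ℝ) = 0 ∧ (e3 1 : ℝ) = 0 ∧
      (e3 2 : ℝ) = 1 := by norm_num [e1, e2, e3, Matrix.cons_val_two, Matrix.tail_cons, Matrix.head_cons]
  obtain ⟨c1, c2, c3, c4, c5, c6, c7, c8, c9⟩ := ec
  have h0 : ∀ x : V, Wan x 0 = w α β x e1 := fun x => by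
    have := hWan x e1; simp only [g, c1, c2, c3] at this; linarith
  have h1 : ∀ x : V, Wan x 1 = w α β x e2 := fun x => by
    have := hWan x e2; simp only [g, c4, c5, c6] at this; linarith
  have h2 : ∀ x : V, Wan x 2 = -(w α β x e3) := fun x => by
    have := hWan x e3; simp only [g, c7, c8, c9] at this; linarith
  have hDx : ∀ (x : V) (j : Fin 3), D x j = Wan x j - c * x j := by
    intro x j
    have := congrFun (h x) j
    simp [Pi.add_apply, Pi.smul_apply, smul_eq_mul] at this
    linarith
  -- components of D on the basis
  have u0 : D e1 0 = -(α^2) - 3/2*β^2 - c := by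
    rw [hDx, h0, show w α β e1 e1 = -(α^2) - 3/2*β^2 from by
      simp [w, W, Rc, A, T, nab, br, g, e1, e2, e3]; ring]
    simp only [c1, c2, c3]; ring
  have u1 : D e1 1 = 2*α*β := by
    rw [hDx, h1, show w α β e1 e2 = 2*α*β from by
      simp [w, W, Rc, A, T, nab, br, g, e1, e2, e3]; ring]
    simp only [c1, c2, c3]; ring
  have u2 : D e1 2 = α*β/2 := by
    rw [hDx, h2, show w α β e1 e3 = -(α*β/2) from by
      simp [w, W, Rc, A, T, nab, br, g, e1, e2, e3]; ring]
    simp only [c1, c2, c3]; ring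
  have v0 : D e2 0 = 2*α*β := by
    rw [hDx, h0, show w α β e2 e1 = 2*α*β from by
      simp [w, W, Rc, A, T, nab, br, g, e1, e2, e3]; ring]
    simp only [c4, c5, c6]; ring
  have v1 : D e2 1 = -2*α^2 - 3/2*β^2 - c := by
    rw [hDx, h1, show w α β e2 e2 = -2*α^2 - 3/2*β^2 from by
      simp [w, W, Rc, A, T, nab, br, g, e1, e2, e3]; ring]
    simp only [c4, c5, c6]; ring
  have v2 : D e2 2 = -(α^2) := by
    rw [hDx, h2, show w α β e2 e3 = α^2 from by
      simp [w, W, Rc, A, T, nab, br, g, e1, e2, e3]; ring]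
    simp only [c4, c5, c6]; ring
  have t0 : D e3 0 = 0 := by
    rw [hDx, h0, show w α β e3 e1 = 0 from by
      simp [w, W, Rc, A, T, nab, br, g, e1, e2, e3]; ring]
    simp only [c7, c8, c9]; ring
  have t1 : D e3 1 = 2*α^2 := by
    rw [hDx, h1, show w α β e3 e2 = 2*α^2 from by
      simp [w, W, Rc, A, T, nab, br, g, e1, e2, e3]; ring]
    simp only [c7, c8, c9]; ring
  have t2 : D e3 2 = 2*α^2 - β^2/2 - c := by
    rw [hDx, h2, show w α β e3 e3 = -2*α^2 + β^2/2 from by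
      simp [w, W, Rc, A, T, nab, br, g, e1, e2, e3]; ring]
    simp only [c7, c8, c9]; ring
  -- bracket component formula
  have hbr : ∀ x y : V, br α β x y =
      ![(x 0*y 1 - x 1*y 0)*α - (x 0*y 2 - x 2*y 0)*α + (x 1*y 2 - x 2*y 1)*β,
        -((x 0*y 2 - x 2*y 0)*β) + (x 1*y 2 - x 2*y 1)*α,
        -((x 0*y 1 - x 1*y 0)*β) + (x 1*y 2 - x 2*y 1)*α] := by
    intro x y
    funext i
    fin_cases i <;> · simp [br, e1, e2, e3]; try ring
  have hb13 : br α β e1 e3 = (-α) • e1 + (-β) • e2 := by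
    funext i; fin_cases i <;> simp [br, e1, e2, e3]
  have hb23 : br α β e2 e3 = β • e1 + α • e2 + α • e3 := by
    funext i; fin_cases i <;> simp [br, e1, e2, e3]
  -- derivation condition on (e1, e3), component 2
  have k1 := congrFun (hD e1 e3) (2 : Fin 3)
  rw [hb13, map_add, map_smul, map_smul, hbr (D e1) e3, hbr e1 (D e3)] at k1
  simp only [Pi.add_apply, Pi.smul_apply, smul_eq_mul] at k1
  simp only [u0, u1, u2, v0, v1, v2, t0, t1, t2] at k1
  simp only [Matrix.cons_val_zero, Matrix.cons_val_one, Matrix.head_cons, Matrix.cons_val_two, Matrix.tail_cons, c1, c2, c3, c4, c5, c6, c7, c8, c9] at k1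
  -- derivation condition on (e2, e3), components 1 and 2
  have k2 := congrFun (hD e2 e3) (1 : Fin 3)
  have k3 := congrFun (hD e2 e3) (2 : Fin 3)
  rw [hb23, map_add, map_add, map_smul, map_smul, map_smul,
    hbr (D e2) e3, hbr e2 (D e3)] at k2 k3
  simp only [Pi.add_apply, Pi.smul_apply, smul_eq_mul] at k2 k3
  simp only [u0, u1, u2, v0, v1, v2, t0, t1, t2] at k2 k3
  simp only [Matrix.cons_val_zero, Matrix.cons_val_one, Matrix.head_cons, Matrix.cons_val_two, Matrix.tail_cons, c1, c2, c3, c4, c5, c6, c7, c8, c9] at k2 k3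
  -- extract polynomial equations and conclude
  have E1 : α^2 * β = 0 := by linear_combination (2:ℝ) * k1
  have hβ : β = 0 := by
    rcases mul_eq_zero.mp E1 with h' | h'
    · exact absurd (pow_eq_zero_iff (by norm_num)|>.mp h') hα
    · exact h'
  subst hβ
  have E2 : c * α = 0 := by linear_combination k2
  have hc : c = 0 := by
    rcases mul_eq_zero.mp E2 with h' | h'
    · exact h'
    · exact absurd h' hα
  subst hc
  have E3 : α^3 = 0 := by linear_combination k3
  exact hα (pow_eq_zero_iff (by norm_num) |>.mp E3)
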